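/- For the construction reducing Densest-k-Subgraph to Influence Minimization (graph G' with seed S, one vertex c_i per original vertex, one vertex d_j per original edge, all probabilities 1), blocking a set B ⊆ C of size k decreases the number of vertices reachable from S by exactly |B| + g, where g is the number of vertices d_j both of whose in-neighbors in C lie in B. -/

import Mathlib

/-!
The reduction graph from Densest-k-Subgraph to Influence Minimization.
The undirected graph `H` has `N` vertices and `M` edges, given by an
endpoint map `ends : Fin M → Fin N × Fin N`.  The reduction graph `G'` has
a seed vertex `Sum.inl ()`, a layer `C` of vertices `Sum.inr (Sum.inl i)`
(one per vertex of `H`) and a layer `D` of vertices `Sum.inr (Sum.inr j)`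
(one per edge of `H`); the seed points to every vertex of `C`, and each
`c` points to the `D`-vertices of the edges it is an endpoint of.  All
propagation probabilities are `1`, so the spread equals the number of
vertices reachable from the seed after removing the blocked vertices.
-/

open Finset

noncomputable section
open scoped Classical

/-- The vertex set of the reduction graph: seed ⊕ C ⊕ D. -/
abbrev DksV (N M : ℕ) := Unit ⊕ Fin N ⊕ Fin M

/-- Adjacency of the reduction graph. -/
def dksAdj {N M : ℕ} (ends : Fin M → Fin N × Fin N) :
    DksV N M → DksV N M → Prop
  | Sum.inl _, Sum.inr (Sum.inl _) => True
  | Sum.inr (Sum.inl i), Sum.inr (Sum.inr j) =>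
      (ends j).1 = i ∨ (ends j).2 = i
  | _, _ => False

/-- Number of vertices reachable from the seed in the reduction graph after
removing the blocker set `B` (the spread, since all probabilities are `1`). -/
def dksSpread {N M : ℕ} (ends : Fin M → Fin N × Fin N)
    (B : Finset (DksV N M)) : ℕ :=
  (Finset.univ.filter fun w : DksV N M =>
      Relation.ReflTransGen
        (fun a b => dksAdj ends a b ∧ a ∉ B ∧ b ∉ B) (Sum.inl ()) w).card

lemma dks_mem_image {N M : ℕ} (B : Finset (Fin N)) (w : DksV N M) :
    w ∈ (B.image fun i => (Sum.inr (Sum.inl i) : DksV N M)) ↔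
      ∃ i ∈ B, w = Sum.inr (Sum.inl i) := by
  simp [Finset.mem_image, eq_comm]

lemma dks_reach_iff {N M : ℕ} (ends : Fin M → Fin N × Fin N)
    (B : Finset (Fin N)) (w : DksV N M) :
    Relation.ReflTransGen
        (fun a b => dksAdj ends a b ∧
          a ∉ (B.image fun i => (Sum.inr (Sum.inl i) : DksV N M)) ∧
          b ∉ (B.image fun i => (Sum.inr (Sum.inl i) : DksV N M)))
        (Sum.inl ()) w ↔
      (w = Sum.inl () ∨
       (∃ i, w = Sum.inr (Sum.inl i) ∧ i ∉ B) ∨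
       (∃ j, w = Sum.inr (Sum.inr j) ∧ ((ends j).1 ∉ B ∨ (ends j).2 ∉ B))) := by
  constructor
  · intro h
    induction h with
    | refl => left; rfl
    | @tail b c hab hbc ih =>
      obtain ⟨hadj, hb₁, hb₂⟩ := hbc
      rcases ih with rfl | ⟨i, rfl, hi⟩ | ⟨j, rfl, hj⟩
      · rcases c with c | i | j
        · exact absurd hadj (by cases c; simp [dksAdj])
        · exact Or.inr (Or.inl ⟨i, rfl, fun hiB =>
            hb₂ ((dks_mem_image B _).2 ⟨i, hiB, rfl⟩)⟩)
        · exact absurd hadj (by simp [dksAdj])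
      · rcases c with c | i' | j
        · exact absurd hadj (by cases c; simp [dksAdj])
        · exact absurd hadj (by simp [dksAdj])
        · refine Or.inr (Or.inr ⟨j, rfl, ?_⟩)
          rcases hadj with h1 | h2
          · exact Or.inl (by rw [h1]; exact hi)
          · exact Or.inr (by rw [h2]; exact hi)
      · rcases c with c | i' | j' <;> exact absurd hadj (by simp [dksAdj])
  · have hseed : (Sum.inl () : DksV N M) ∉
        (B.image fun i => (Sum.inr (Sum.inl i) : DksV N M)) := by
      simp [dks_mem_image]
    have hD : ∀ j : Fin M, (Sum.inr (Sum.inr j) : DksV N M) ∉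
        (B.image fun i => (Sum.inr (Sum.inl i) : DksV N M)) := by
      simp [dks_mem_image]
    rintro (rfl | ⟨i, rfl, hi⟩ | ⟨j, rfl, hj⟩)
    · exact Relation.ReflTransGen.refl
    · have hiB : (Sum.inr (Sum.inl i) : DksV N M) ∉
          (B.image fun i => (Sum.inr (Sum.inl i) : DksV N M)) := by
        simp [dks_mem_image, hi]
      exact Relation.ReflTransGen.single ⟨by simp [dksAdj], hseed, hiB⟩
    · rcases hj with hj | hj
      · have hiB : (Sum.inr (Sum.inl (ends j).1) : DksV N M) ∉
            (B.image fun i => (Sum.inr (Sum.inl i) : DksV N M)) := by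
          simp [dks_mem_image, hj]
        exact Relation.ReflTransGen.head ⟨by simp [dksAdj], hseed, hiB⟩
          (Relation.ReflTransGen.single ⟨Or.inl rfl, hiB, hD j⟩)
      · have hiB : (Sum.inr (Sum.inl (ends j).2) : DksV N M) ∉
            (B.image fun i => (Sum.inr (Sum.inl i) : DksV N M)) := by
          simp [dks_mem_image, hj]
        exact Relation.ReflTransGen.head ⟨by simp [dksAdj], hseed, hiB⟩
          (Relation.ReflTransGen.single ⟨Or.inr rfl, hiB, hD j⟩)

/-- blocking a set `B ⊆ C` of size `k` in the reduction graph
decreases the number of vertices reachable from the seed by exactly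
`|B| + g`, where `g` is the number of `D`-vertices both of whose in-neighbors
in `C` are blocked. -/
theorem dks_blocking_decrease {N M : ℕ} (ends : Fin M → Fin N × Fin N)
    (hends : ∀ j, (ends j).1 ≠ (ends j).2)
    (k : ℕ) (B : Finset (Fin N)) (hk : B.card = k) :
    dksSpread ends ∅ =
      dksSpread ends (B.image fun i => (Sum.inr (Sum.inl i) : DksV N M)) +
        k + (Finset.univ.filter fun j : Fin M =>
              (ends j).1 ∈ B ∧ (ends j).2 ∈ B).card := by
  subst hk
  have key : ∀ B : Finset (Fin N),
      dksSpread ends (B.image fun i => (Sum.inr (Sum.inl i) : DksV N M)) +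
        (B.card + (Finset.univ.filter fun j : Fin M =>
            (ends j).1 ∈ B ∧ (ends j).2 ∈ B).card) = Fintype.card (DksV N M) := by
    intro B
    unfold dksSpread
    have hneg : (Finset.univ.filter fun w : DksV N M =>
        ¬ Relation.ReflTransGen
          (fun a b => dksAdj ends a b ∧
            a ∉ (B.image fun i => (Sum.inr (Sum.inl i) : DksV N M)) ∧
            b ∉ (B.image fun i => (Sum.inr (Sum.inl i) : DksV N M)))
          (Sum.inl ()) w) =
        (B.image fun i => (Sum.inr (Sum.inl i) : DksV N M)) ∪
        ((Finset.univ.filter fun j : Fin M =>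
            (ends j).1 ∈ B ∧ (ends j).2 ∈ B).image
          fun j => (Sum.inr (Sum.inr j) : DksV N M)) := by
      ext w
      simp only [Finset.mem_filter, Finset.mem_univ, true_and, dks_reach_iff,
        Finset.mem_union]
      rcases w with _ | i | j <;> simp [dks_mem_image] <;> tauto
    have hdisj : Disjoint
        (B.image fun i => (Sum.inr (Sum.inl i) : DksV N M))
        ((Finset.univ.filter fun j : Fin M =>
            (ends j).1 ∈ B ∧ (ends j).2 ∈ B).image
          fun j => (Sum.inr (Sum.inr j) : DksV N M)) := by
      rw [Finset.disjoint_left]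
      intro w hw hw'
      simp only [Finset.mem_image] at hw hw'
      obtain ⟨i, _, rfl⟩ := hw
      obtain ⟨j, _, hj⟩ := hw'
      exact absurd hj (by simp)
    have hsum := Finset.card_filter_add_card_filter_not
      (s := (Finset.univ : Finset (DksV N M)))
      (p := fun w : DksV N M =>
        Relation.ReflTransGen
          (fun a b => dksAdj ends a b ∧
            a ∉ (B.image fun i => (Sum.inr (Sum.inl i) : DksV N M)) ∧
            b ∉ (B.image fun i => (Sum.inr (Sum.inl i) : DksV N M)))
          (Sum.inl ()) w)
    rw [hneg, Finset.card_union_of_disjoint hdisj,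
      Finset.card_image_of_injective _ (by intro a b h; simpa using h),
      Finset.card_image_of_injective _ (by intro a b h; simpa using h)]
      at hsum
    simpa [Finset.card_univ] using hsum
  have h0 := key ∅
  have hB := key B
  simp only [Finset.image_empty, Finset.card_empty, Finset.notMem_empty,
    false_and, Finset.filter_false, Finset.card_empty, add_zero] at h0
  omega
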